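/- Let E : ℝ^d → ℝ be nonnegative and differentiable with Lipschitz continuous gradient, let ν > 0, ε > 0, and fix u⁰ ∈ ℝ^d. Suppose u ∈ C¹([0,∞); ℝ^d) with u(0) = u⁰ satisfies W^ε(u) ≤ W^ε(v) for every v ∈ C¹([0,∞); ℝ^d) with v(0) = u⁰. Then for every T ≥ 0 one has ∫_0^T E(u(t)) dt ≤ E(u⁰)(T + ε). -/

import Mathlib

/-- The parabolic infinite-horizon WIDE functional
`W^ε(v) = ∫_0^∞ e^{-t/ε} ((εν/2)|v'|² + E(v)) dt`, with values in `[0,∞]`;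
the derivative is taken within `[0,∞)`. -/
noncomputable def parabolicWideFunctional (d : ℕ) (E : EuclideanSpace ℝ (Fin d) → ℝ)
    (ν ε : ℝ) (v : ℝ → EuclideanSpace ℝ (Fin d)) : ENNReal :=
  ∫⁻ t in Set.Ioi (0 : ℝ), ENNReal.ofReal (Real.exp (-t / ε) *
    ((ε * ν / 2) * ‖derivWithin v (Set.Ici 0) t‖ ^ 2 + E (v t)))


open Real MeasureTheory Set Filter Topology

noncomputable def etaAux (s δ t : ℝ) : ℝ :=
  t - δ * (Real.log (1 + Real.exp ((t - s)/δ)) - Real.log (1 + Real.exp (-s/δ)))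

noncomputable def sigmaAux (s δ t : ℝ) : ℝ := (1 + Real.exp ((t - s)/δ))⁻¹

lemma one_add_exp_pos (x : ℝ) : 0 < 1 + Real.exp x := by positivity

lemma sigmaAux_pos (s δ t : ℝ) : 0 < sigmaAux s δ t := by
  unfold sigmaAux; positivity

lemma sigmaAux_le_one (s δ t : ℝ) : sigmaAux s δ t ≤ 1 := by
  unfold sigmaAux
  rw [inv_le_one_iff₀]
  right
  nlinarith [Real.exp_pos ((t - s)/δ)]

lemma etaAux_contDiff (s δ : ℝ) (hδ : 0 < δ) : ContDiff ℝ 1 (etaAux s δ) := by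
  unfold etaAux
  apply ContDiff.sub contDiff_id
  apply ContDiff.mul contDiff_const
  apply ContDiff.sub _ contDiff_const
  apply ContDiff.log
  · exact contDiff_const.add (((contDiff_id.sub contDiff_const).div_const δ).exp)
  · intro x; positivity

lemma etaAux_hasDerivAt (s δ : ℝ) (hδ : 0 < δ) (t : ℝ) :
    HasDerivAt (etaAux s δ) (sigmaAux s δ t) t := by
  have h1 : HasDerivAt (fun t : ℝ => (t - s)/δ) (1/δ) t := by
    simpa using ((hasDerivAt_id t).sub_const s).div_const δ
  have h2 : HasDerivAt (fun t : ℝ => 1 + Real.exp ((t - s)/δ))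
      (Real.exp ((t - s)/δ) * (1/δ)) t := (h1.exp).const_add 1
  have h3 : HasDerivAt (fun t : ℝ => Real.log (1 + Real.exp ((t - s)/δ)))
      (Real.exp ((t - s)/δ) * (1/δ) / (1 + Real.exp ((t - s)/δ))) t :=
    h2.log (by positivity)
  have h4 := ((h3.sub_const (Real.log (1 + Real.exp (-s/δ)))).const_mul δ)
  have h5 := (hasDerivAt_id t).sub h4
  refine h5.congr_deriv ?_
  unfold sigmaAux
  have := (one_add_exp_pos ((t - s)/δ)).ne'
  field_simp
  ring

lemma etaAux_zero (s δ : ℝ) : etaAux s δ 0 = 0 := by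
  unfold etaAux
  rw [show (0 - s)/δ = -s/δ by ring]
  ring

lemma log_one_add_exp_le (x y : ℝ) (h : y ≤ x) :
    Real.log (1 + Real.exp x) ≤ (x - y) + Real.log (1 + Real.exp y) := by
  have key : 1 + Real.exp x ≤ Real.exp (x - y) * (1 + Real.exp y) := by
    have h1 : (1:ℝ) ≤ Real.exp (x - y) := Real.one_le_exp (by linarith)
    have h2 : Real.exp (x - y) * Real.exp y = Real.exp x := by
      rw [← Real.exp_add]; ring_nf
    nlinarith [Real.exp_pos y]
  calc Real.log (1 + Real.exp x) ≤ Real.log (Real.exp (x - y) * (1 + Real.exp y)) :=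
        Real.log_le_log (by positivity) key
    _ = (x - y) + Real.log (1 + Real.exp y) := by
        rw [Real.log_mul (Real.exp_ne_zero _) (one_add_exp_pos y).ne', Real.log_exp]

lemma le_log_one_add_exp (x : ℝ) : x ≤ Real.log (1 + Real.exp x) := by
  calc x = Real.log (Real.exp x) := (Real.log_exp x).symm
    _ ≤ Real.log (1 + Real.exp x) :=
      Real.log_le_log (Real.exp_pos x) (by linarith)

lemma log_one_add_exp_nonneg (x : ℝ) : 0 ≤ Real.log (1 + Real.exp x) := by
  apply Real.log_nonneg; nlinarith [Real.exp_pos x]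

lemma log_one_add_exp_le_log_two (x : ℝ) (hx : x ≤ 0) :
    Real.log (1 + Real.exp x) ≤ Real.log 2 := by
  apply Real.log_le_log (by positivity)
  nlinarith [Real.exp_le_one_iff.mpr hx]

lemma etaAux_nonneg (s δ : ℝ) (hδ : 0 < δ) (hs : 0 ≤ s) (t : ℝ) (ht : 0 ≤ t) :
    0 ≤ etaAux s δ t := by
  unfold etaAux
  have hle : -s/δ ≤ (t - s)/δ := by
    gcongr
    linarith
  have key := log_one_add_exp_le ((t - s)/δ) (-s/δ) hle
  have hxy : (t - s)/δ - (-s/δ) = t/δ := by field_simp; ring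
  rw [hxy] at key
  have h2 : δ * (Real.log (1 + Real.exp ((t - s)/δ)) - Real.log (1 + Real.exp (-s/δ)))
      ≤ δ * (t/δ) := by
    apply mul_le_mul_of_nonneg_left (by linarith) hδ.le
  have ht' : δ * (t/δ) = t := by field_simp
  linarith

lemma etaAux_le (s δ : ℝ) (hδ : 0 < δ) (hs : 0 ≤ s) (t : ℝ) :
    etaAux s δ t ≤ s + δ * Real.log 2 := by
  unfold etaAux
  have h1 := le_log_one_add_exp ((t - s)/δ)
  have hns : -s/δ ≤ 0 := by
    apply div_nonpos_of_nonpos_of_nonneg <;> linarith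
  have h2 := log_one_add_exp_le_log_two (-s/δ) hns
  have h3 : δ * ((t-s)/δ) = t - s := by field_simp
  nlinarith [mul_le_mul_of_nonneg_left h1 hδ.le, mul_le_mul_of_nonneg_left h2 hδ.le]

noncomputable def deltaSeq (n : ℕ) : ℝ := (1:ℝ)/(n+1)

lemma deltaSeq_pos (n : ℕ) : 0 < deltaSeq n := by unfold deltaSeq; positivity

lemma deltaSeq_le_one (n : ℕ) : deltaSeq n ≤ 1 := by
  unfold deltaSeq
  rw [div_le_one (by positivity)]
  simp

lemma tendsto_deltaSeq : Tendsto deltaSeq atTop (𝓝 0) :=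
  tendsto_one_div_add_atTop_nhds_zero_nat

lemma log_one_add_exp_identity (x : ℝ) :
    Real.log (1 + Real.exp x) = x + Real.log (1 + Real.exp (-x)) := by
  have h : (1 : ℝ) + Real.exp x = Real.exp x * (1 + Real.exp (-x)) := by
    rw [mul_add, mul_one, ← Real.exp_add]; simp; ring
  rw [h, Real.log_mul (Real.exp_ne_zero _) (one_add_exp_pos _).ne', Real.log_exp]

lemma etaAux_dist (s δ t : ℝ) (hδ : 0 < δ) (hs : 0 ≤ s) (ht : 0 ≤ t) :
    |etaAux s δ t - min t s| ≤ δ * Real.log 2 := by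
  rcases le_total t s with h | h
  · rw [min_eq_left h]
    unfold etaAux
    have h1a := log_one_add_exp_nonneg ((t - s)/δ)
    have h1b := log_one_add_exp_le_log_two ((t - s)/δ)
      (div_nonpos_of_nonpos_of_nonneg (by linarith) hδ.le)
    have h2a := log_one_add_exp_nonneg (-s/δ)
    have h2b := log_one_add_exp_le_log_two (-s/δ)
      (div_nonpos_of_nonpos_of_nonneg (by linarith) hδ.le)
    rw [abs_le]
    constructor <;> nlinarith
  · rw [min_eq_right h]
    unfold etaAux
    have hx : 0 ≤ (t - s)/δ := div_nonneg (by linarith) hδ.le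
    rw [log_one_add_exp_identity ((t - s)/δ)]
    have hid : δ * ((t-s)/δ) = t - s := by field_simp
    have h1a := log_one_add_exp_nonneg (-((t - s)/δ))
    have h1b := log_one_add_exp_le_log_two (-((t - s)/δ)) (by linarith)
    have h2a := log_one_add_exp_nonneg (-s/δ)
    have h2b := log_one_add_exp_le_log_two (-s/δ)
      (div_nonpos_of_nonpos_of_nonneg (by linarith) hδ.le)
    rw [abs_le]
    constructor <;> nlinarith

lemma tendsto_etaAux (s t : ℝ) (hs : 0 ≤ s) (ht : 0 ≤ t) :
    Tendsto (fun n : ℕ => etaAux s (deltaSeq n) t) atTop (𝓝 (min t s)) := by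
  have h0 : Tendsto (fun n : ℕ => etaAux s (deltaSeq n) t - min t s) atTop (𝓝 0) := by
    apply squeeze_zero_norm (a := fun n => deltaSeq n * Real.log 2)
      (fun n => by
        rw [Real.norm_eq_abs]
        exact etaAux_dist s (deltaSeq n) t (deltaSeq_pos n) hs ht)
    simpa using tendsto_deltaSeq.mul_const (Real.log 2)
  have := h0.add (tendsto_const_nhds (x := min t s))
  simpa using this

lemma exp_div_deltaSeq (c : ℝ) (n : ℕ) :
    Real.exp (c / deltaSeq n) = Real.exp c ^ (n + 1) := by
  rw [← Real.exp_nat_mul]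
  unfold deltaSeq
  push_cast
  field_simp

lemma tendsto_sigmaAux_of_lt (s t : ℝ) (h : t < s) :
    Tendsto (fun n : ℕ => sigmaAux s (deltaSeq n) t) atTop (𝓝 1) := by
  have hexp : Tendsto (fun n : ℕ => Real.exp ((t - s) / deltaSeq n)) atTop (𝓝 0) := by
    simp only [exp_div_deltaSeq]
    have hr : |Real.exp (t - s)| < 1 := by
      rw [abs_of_pos (Real.exp_pos _)]
      exact Real.exp_lt_one_iff.mpr (by linarith)
    exact (tendsto_pow_atTop_nhds_zero_of_abs_lt_one hr).comp (tendsto_add_atTop_nat 1)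
  have := ((tendsto_const_nhds (x := (1:ℝ))).add hexp).inv₀ (by norm_num)
  simpa [sigmaAux] using this

lemma tendsto_sigmaAux_of_gt (s t : ℝ) (h : s < t) :
    Tendsto (fun n : ℕ => sigmaAux s (deltaSeq n) t) atTop (𝓝 0) := by
  apply squeeze_zero_norm (f := fun n : ℕ => sigmaAux s (deltaSeq n) t)
    (a := fun n : ℕ => Real.exp (s - t) ^ (n + 1))
  · intro n
    rw [Real.norm_eq_abs, abs_of_pos (sigmaAux_pos _ _ _)]
    unfold sigmaAux
    rw [← exp_div_deltaSeq, show (s - t)/deltaSeq n = -((t - s)/deltaSeq n) by ring,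
      Real.exp_neg]
    apply inv_anti₀ (Real.exp_pos _)
    linarith
  · have hr : |Real.exp (s - t)| < 1 := by
      rw [abs_of_pos (Real.exp_pos _)]
      exact Real.exp_lt_one_iff.mpr (by linarith)
    exact (tendsto_pow_atTop_nhds_zero_of_abs_lt_one hr).comp (tendsto_add_atTop_nat 1)

lemma integrableOn_exp_neg_div (ε : ℝ) (hε : 0 < ε) (s : ℝ) :
    IntegrableOn (fun t : ℝ => Real.exp (-t/ε)) (Set.Ioi s) := by
  have h := exp_neg_integrableOn_Ioi s (b := 1/ε) (by positivity)
  have heq : (fun t : ℝ => Real.exp (-t/ε)) = fun t : ℝ => Real.exp (-(1/ε) * t) := by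
    funext x; congr 1; ring
  rw [heq]; exact h

lemma integral_exp_neg_div (ε : ℝ) (hε : 0 < ε) (s : ℝ) :
    ∫ t in Set.Ioi s, Real.exp (-t/ε) = ε * Real.exp (-s/ε) := by
  have hderiv : ∀ x ∈ Set.Ioi s, HasDerivAt (fun t : ℝ => -ε * Real.exp (-t/ε))
      (Real.exp (-x/ε)) x := by
    intro x _
    have h1 : HasDerivAt (fun t : ℝ => -t/ε) (-1/ε) x := by
      simpa using ((hasDerivAt_id x).neg.div_const ε)
    have h3 := (h1.exp).const_mul (-ε)
    refine h3.congr_deriv ?_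
    field_simp
  have hcont : ContinuousWithinAt (fun t : ℝ => -ε * Real.exp (-t/ε)) (Set.Ici s) s :=
    (Continuous.continuousWithinAt (by fun_prop))
  have htend : Tendsto (fun t : ℝ => -ε * Real.exp (-t/ε)) atTop (𝓝 0) := by
    have h1 : Tendsto (fun t : ℝ => -t/ε) atTop atBot := by
      simp only [neg_div]
      exact tendsto_neg_atBot_iff.mpr (Tendsto.atTop_div_const hε tendsto_id)
    have := (Real.tendsto_exp_atBot.comp h1).const_mul (-ε)
    simpa using this
  have hres := integral_Ioi_of_hasDerivAt_of_tendsto hcont hderiv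
    (integrableOn_exp_neg_div ε hε s) htend
  rw [hres]; ring

set_option maxHeartbeats 2000000 in
/-- Dynamic-Programming-Principle energy estimate. Let `E : ℝ^d → ℝ`
be nonnegative and differentiable with Lipschitz gradient, `ν > 0`, `ε > 0`, `a = u⁰`.
If `u ∈ C¹([0,∞);ℝ^d)` with `u(0) = u⁰` minimizes `W^ε` among all such curves, then for
every `T ≥ 0` one has `∫_0^T E(u(t)) dt ≤ E(u⁰)(T + ε)`. -/
theorem wide_dynamic_programming_energy_estimate (d : ℕ)
    (E : EuclideanSpace ℝ (Fin d) → ℝ) (hEdiff : Differentiable ℝ E)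
    (hEnn : ∀ x, 0 ≤ E x) (K : NNReal) (hLip : LipschitzWith K (gradient E))
    (ν ε : ℝ) (hν : 0 < ν) (hε : 0 < ε)
    (a : EuclideanSpace ℝ (Fin d)) (u : ℝ → EuclideanSpace ℝ (Fin d))
    (hu : ContDiffOn ℝ 1 u (Set.Ici 0)) (hu0 : u 0 = a)
    (hmin : ∀ v : ℝ → EuclideanSpace ℝ (Fin d), ContDiffOn ℝ 1 v (Set.Ici 0) → v 0 = a →
      parabolicWideFunctional d E ν ε u ≤ parabolicWideFunctional d E ν ε v) :
    ∀ T : ℝ, 0 ≤ T → (∫ t in (0 : ℝ)..T, E (u t)) ≤ E a * (T + ε) := by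
  intro T hT
  have hc0 : (0:ℝ) ≤ ε * ν / 2 := by positivity
  set c : ℝ := ε * ν / 2 with hc_def
  set u' : ℝ → EuclideanSpace ℝ (Fin d) := derivWithin u (Set.Ici 0) with hu'_def
  set L : ℝ → ℝ := fun t => Real.exp (-t/ε) * (c * ‖u' t‖^2 + E (u t)) with hL_def
  set f : ℝ → ℝ := fun t => Real.exp (-t/ε) * E (u t) with hf_def
  -- continuity facts
  have hexpc : Continuous fun t : ℝ => Real.exp (-t/ε) := by fun_prop
  have hucont : ContinuousOn u (Set.Ici 0) := hu.continuousOn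
  have hu'c : ContinuousOn u' (Set.Ici 0) :=
    hu.continuousOn_derivWithin (uniqueDiffOn_Ici 0) le_rfl
  have hEc : Continuous E := hEdiff.continuous
  have hLcont : ContinuousOn L (Set.Ici 0) := by
    apply (hexpc.continuousOn).mul
    exact (continuousOn_const.mul ((hu'c.norm).pow 2)).add (hEc.comp_continuousOn hucont)
  have hfcont : ContinuousOn f (Set.Ici 0) :=
    hexpc.continuousOn.mul (hEc.comp_continuousOn hucont)
  have hL0 : ∀ t, 0 ≤ L t := fun t =>
    mul_nonneg (Real.exp_pos _).le (add_nonneg (by positivity) (hEnn _))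
  have hf0 : ∀ t, 0 ≤ f t := fun t => mul_nonneg (Real.exp_pos _).le (hEnn _)
  have hf_le_L : ∀ t, f t ≤ L t := by
    intro t
    apply mul_le_mul_of_nonneg_left ?_ (Real.exp_pos _).le
    have : 0 ≤ c * ‖u' t‖^2 := mul_nonneg hc0 (by positivity)
    linarith
  -- Step A : comparison with the constant curve
  have hconst : parabolicWideFunctional d E ν ε (fun _ => a) = ENNReal.ofReal (ε * E a) := by
    unfold parabolicWideFunctional
    have h1 : ∫⁻ t in Set.Ioi (0:ℝ), ENNReal.ofReal (Real.exp (-t/ε) *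
        ((ε*ν/2) * ‖derivWithin (fun _ => a) (Set.Ici (0:ℝ)) t‖^2 + E a)) =
        ∫⁻ t in Set.Ioi (0:ℝ), ENNReal.ofReal (Real.exp (-t/ε) * E a) := by
      apply MeasureTheory.setLIntegral_congr_fun measurableSet_Ioi
      simp only [Set.EqOn]
      intro t ht
      rw [derivWithin_fun_const (Set.Ici (0:ℝ)) a]
      norm_num
    rw [h1, ← MeasureTheory.ofReal_integral_eq_lintegral_ofReal
      ((integrableOn_exp_neg_div ε hε 0).mul_const (E a))
      (Filter.Eventually.of_forall fun t => mul_nonneg (Real.exp_pos _).le (hEnn a))]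
    congr 1
    rw [MeasureTheory.integral_mul_const, integral_exp_neg_div ε hε 0]
    norm_num
  have hWu_le : parabolicWideFunctional d E ν ε u ≤ ENNReal.ofReal (ε * E a) :=
    hconst ▸ hmin (fun _ => a) contDiffOn_const rfl
  -- Step B : integrability of L and the basic bound
  have hLmeas : MeasureTheory.AEStronglyMeasurable L (volume.restrict (Set.Ioi 0)) :=
    (hLcont.mono Set.Ioi_subset_Ici_self).aestronglyMeasurable measurableSet_Ioi
  have hWu_def : parabolicWideFunctional d E ν ε u
      = ∫⁻ t in Set.Ioi (0:ℝ), ENNReal.ofReal (L t) := rfl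
  have hLint : MeasureTheory.IntegrableOn L (Set.Ioi 0) := by
    refine ⟨hLmeas, ?_⟩
    rw [MeasureTheory.hasFiniteIntegral_iff_ofReal (Filter.Eventually.of_forall hL0)]
    calc ∫⁻ t in Set.Ioi (0:ℝ), ENNReal.ofReal (L t)
        = parabolicWideFunctional d E ν ε u := hWu_def.symm
      _ ≤ ENNReal.ofReal (ε * E a) := hWu_le
      _ < ⊤ := ENNReal.ofReal_lt_top
  have hWu_eq : parabolicWideFunctional d E ν ε u
      = ENNReal.ofReal (∫ t in Set.Ioi (0:ℝ), L t) := by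
    rw [hWu_def, ← MeasureTheory.ofReal_integral_eq_lintegral_ofReal hLint
      (Filter.Eventually.of_forall hL0)]
  have hI0 : ∫ t in Set.Ioi (0:ℝ), L t ≤ ε * E a := by
    rw [hWu_eq] at hWu_le
    exact (ENNReal.ofReal_le_ofReal_iff (mul_nonneg hε.le (hEnn a))).mp hWu_le
  -- Step C : DPP estimate via smoothed stopped reparametrizations
  have key : ∀ s : ℝ, 0 < s →
      (∫ t in Set.Ioi s, L t) ≤ ε * Real.exp (-s/ε) * E (u s) := by
    intro s hs
    set η : ℕ → ℝ → ℝ := fun n => etaAux s (deltaSeq n) with hη_def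
    set σ : ℕ → ℝ → ℝ := fun n => sigmaAux s (deltaSeq n) with hσ_def
    have hηmaps : ∀ n, Set.MapsTo (η n) (Set.Ici 0) (Set.Ici 0) := fun n t ht =>
      Set.mem_Ici.mpr (etaAux_nonneg s _ (deltaSeq_pos n) hs.le t (Set.mem_Ici.mp ht))
    have hlog2 : Real.log 2 ≤ 1 := by
      have := Real.log_le_sub_one_of_pos (by norm_num : (0:ℝ) < 2); linarith
    have hηIcc : ∀ n t, 0 ≤ t → η n t ∈ Set.Icc (0:ℝ) (s+1) := by
      intro n t ht
      refine ⟨etaAux_nonneg s _ (deltaSeq_pos n) hs.le t ht, ?_⟩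
      have h1 := etaAux_le s (deltaSeq n) (deltaSeq_pos n) hs.le t
      have h2 := deltaSeq_pos n
      have h3 := deltaSeq_le_one n
      have h4 : (0:ℝ) ≤ Real.log 2 := Real.log_nonneg (by norm_num)
      nlinarith
    have hηcont : ∀ n, Continuous (η n) :=
      fun n => (etaAux_contDiff s _ (deltaSeq_pos n)).continuous
    have hσcont : ∀ n, Continuous (σ n) := by
      intro n
      rw [hσ_def]
      unfold sigmaAux
      exact Continuous.inv₀ (by fun_prop) (fun x => by positivity)
    have hσpos : ∀ n t, 0 < σ n t := fun n t => sigmaAux_pos s (deltaSeq n) t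
    have hσle : ∀ n t, σ n t ≤ 1 := fun n t => sigmaAux_le_one s (deltaSeq n) t
    -- uniform bounds on the compact window [0, s+1]
    obtain ⟨C1, hC1⟩ := (isCompact_Icc (a := (0:ℝ)) (b := s+1)).exists_bound_of_continuousOn
      (hu'c.mono Set.Icc_subset_Ici_self)
    obtain ⟨C2, hC2⟩ := (isCompact_Icc (a := (0:ℝ)) (b := s+1)).exists_bound_of_continuousOn
      ((hEc.comp_continuousOn hucont).mono Set.Icc_subset_Ici_self)
    have hmemz : (0:ℝ) ∈ Set.Icc (0:ℝ) (s+1) := ⟨le_rfl, by linarith⟩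
    have hC1_0 : 0 ≤ C1 := le_trans (norm_nonneg _) (hC1 0 hmemz)
    set bound : ℝ → ℝ := fun t => Real.exp (-t/ε) * (c * C1^2 + C2) with hbound_def
    have hbound_int : MeasureTheory.IntegrableOn bound (Set.Ioi 0) :=
      (integrableOn_exp_neg_div ε hε 0).mul_const _
    set F : ℕ → ℝ → ℝ := fun n t =>
      Real.exp (-t/ε) * (c * (σ n t * ‖u' (η n t)‖)^2 + E (u (η n t))) with hF_def
    have hF_nonneg : ∀ n t, 0 ≤ F n t := fun n t =>
      mul_nonneg (Real.exp_pos _).le (add_nonneg (by positivity) (hEnn _))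
    have hF_bound : ∀ n, ∀ t, 0 < t → F n t ≤ bound t := by
      intro n t ht
      rw [hF_def, hbound_def]
      apply mul_le_mul_of_nonneg_left ?_ (Real.exp_pos _).le
      have h1 : ‖u' (η n t)‖ ≤ C1 := hC1 _ (hηIcc n t ht.le)
      have h2 : E (u (η n t)) ≤ C2 := by
        have := hC2 _ (hηIcc n t ht.le)
        rw [Real.norm_eq_abs] at this
        exact le_trans (le_abs_self _) this
      have h3 : (σ n t * ‖u' (η n t)‖)^2 ≤ C1^2 := by
        have hw0 : 0 ≤ ‖u' (η n t)‖ := norm_nonneg _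
        have h4 : ‖u' (η n t)‖^2 ≤ C1^2 := by nlinarith
        have h5 : (σ n t)^2 ≤ 1 := by nlinarith [hσpos n t, hσle n t]
        calc (σ n t * ‖u' (η n t)‖)^2 = (σ n t)^2 * ‖u' (η n t)‖^2 := by ring
          _ ≤ 1 * C1^2 := mul_le_mul h5 h4 (sq_nonneg _) zero_le_one
          _ = C1^2 := one_mul _
      nlinarith [mul_le_mul_of_nonneg_left h3 hc0]
    have hFcont : ∀ n, ContinuousOn (F n) (Set.Ici 0) := by
      intro n
      rw [hF_def]
      apply (hexpc.continuousOn).mul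
      apply ContinuousOn.add
      · apply continuousOn_const.mul
        apply ContinuousOn.pow
        apply ContinuousOn.mul ((hσcont n).continuousOn)
        exact (hu'c.comp (hηcont n).continuousOn (hηmaps n)).norm
      · exact (hEc.comp_continuousOn hucont).comp (hηcont n).continuousOn (hηmaps n)
    have hF_int : ∀ n, MeasureTheory.IntegrableOn (F n) (Set.Ioi 0) := by
      intro n
      apply MeasureTheory.Integrable.mono' hbound_int
        (((hFcont n).mono Set.Ioi_subset_Ici_self).aestronglyMeasurable measurableSet_Ioi)
      filter_upwards [MeasureTheory.ae_restrict_mem measurableSet_Ioi] with t ht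
      rw [Real.norm_eq_abs, abs_of_nonneg (hF_nonneg n t)]
      exact hF_bound n t ht
    -- the curves u ∘ η n are admissible competitors
    have hvC1 : ∀ n, ContDiffOn ℝ 1 (u ∘ η n) (Set.Ici 0) := fun n =>
      hu.comp ((etaAux_contDiff s _ (deltaSeq_pos n)).contDiffOn) (hηmaps n)
    have hWvn : ∀ n, parabolicWideFunctional d E ν ε (u ∘ η n)
        = ∫⁻ t in Set.Ioi (0:ℝ), ENNReal.ofReal (F n t) := by
      intro n
      unfold parabolicWideFunctional
      apply MeasureTheory.setLIntegral_congr_fun measurableSet_Ioi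
      simp only [Set.EqOn]
      intro t ht
      have htI : t ∈ Set.Ici (0:ℝ) := Set.mem_Ici.mpr (le_of_lt ht)
      have hdu : HasDerivWithinAt u (u' (η n t)) (Set.Ici 0) (η n t) :=
        ((hu.differentiableOn one_ne_zero) _ (hηmaps n htI)).hasDerivWithinAt
      have hdη : HasDerivWithinAt (η n) (σ n t) (Set.Ici 0) t :=
        (etaAux_hasDerivAt s _ (deltaSeq_pos n) t).hasDerivWithinAt
      have hcomp := HasDerivWithinAt.scomp t hdu hdη (hηmaps n)
      have hderiv_eq : derivWithin (u ∘ η n) (Set.Ici 0) t = σ n t • u' (η n t) :=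
        hcomp.derivWithin (uniqueDiffOn_Ici 0 t htI)
      rw [hderiv_eq, hF_def]
      simp only [Function.comp_apply, norm_smul, Real.norm_eq_abs,
        abs_of_pos (hσpos n t), hc_def]
    have hLe_n : ∀ n, (∫ t in Set.Ioi (0:ℝ), L t) ≤ ∫ t in Set.Ioi (0:ℝ), F n t := by
      intro n
      have h1 := hmin (u ∘ η n) (hvC1 n) (by
        show u (η n 0) = a
        rw [hη_def]
        simp only [etaAux_zero]
        exact hu0)
      rw [hWu_eq, hWvn n, ← MeasureTheory.ofReal_integral_eq_lintegral_ofReal (hF_int n)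
        (Filter.Eventually.of_forall (hF_nonneg n))] at h1
      exact (ENNReal.ofReal_le_ofReal_iff
        (MeasureTheory.setIntegral_nonneg measurableSet_Ioi (fun t _ => hF_nonneg n t))).mp h1
    -- limit of the comparison integrals
    set Flim : ℝ → ℝ := fun t => Real.exp (-t/ε) *
      (c * ((if t < s then (1:ℝ) else 0) * ‖u' (min t s)‖)^2 + E (u (min t s))) with hFlim_def
    have hne : ∀ᵐ t ∂(volume.restrict (Set.Ioi (0:ℝ))), t ≠ s := by
      apply MeasureTheory.ae_restrict_of_ae
      rw [MeasureTheory.ae_iff]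
      simpa using MeasureTheory.measure_singleton s
    have h_lim : ∀ᵐ t ∂(volume.restrict (Set.Ioi (0:ℝ))),
        Filter.Tendsto (fun n => F n t) atTop (𝓝 (Flim t)) := by
      filter_upwards [hne, MeasureTheory.ae_restrict_mem measurableSet_Ioi] with t hts ht
      have htmem : t ∈ Set.Ici (0:ℝ) := Set.mem_Ici.mpr (le_of_lt ht)
      have hmmem : min t s ∈ Set.Ici (0:ℝ) := Set.mem_Ici.mpr (le_min (le_of_lt ht) hs.le)
      have hηt : Filter.Tendsto (fun n => η n t) atTop (𝓝 (min t s)) :=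
        tendsto_etaAux s t hs.le (le_of_lt ht)
      have hηt' : Filter.Tendsto (fun n => η n t) atTop (𝓝[Set.Ici 0] (min t s)) :=
        tendsto_nhdsWithin_iff.mpr ⟨hηt, Filter.Eventually.of_forall (fun n => hηmaps n htmem)⟩
      have hu'lim : Filter.Tendsto (fun n => u' (η n t)) atTop (𝓝 (u' (min t s))) :=
        (hu'c (min t s) hmmem).tendsto.comp hηt'
      have hulim : Filter.Tendsto (fun n => E (u (η n t))) atTop (𝓝 (E (u (min t s)))) :=
        ((hEc.tendsto _).comp ((hucont (min t s) hmmem).tendsto)).comp hηt'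
      have hσlim : Filter.Tendsto (fun n => σ n t) atTop
          (𝓝 (if t < s then (1:ℝ) else 0)) := by
        rcases lt_or_gt_of_ne hts with h | h
        · rw [if_pos h]; exact tendsto_sigmaAux_of_lt s t h
        · rw [if_neg (not_lt.mpr h.le)]; exact tendsto_sigmaAux_of_gt s t h
      exact tendsto_const_nhds.mul
        (((tendsto_const_nhds.mul ((hσlim.mul hu'lim.norm).pow 2))).add hulim)
    have h_bound_ae : ∀ n, ∀ᵐ t ∂(volume.restrict (Set.Ioi (0:ℝ))), ‖F n t‖ ≤ bound t := by
      intro n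
      filter_upwards [MeasureTheory.ae_restrict_mem measurableSet_Ioi] with t ht
      rw [Real.norm_eq_abs, abs_of_nonneg (hF_nonneg n t)]
      exact hF_bound n t ht
    have hlim_integral : Filter.Tendsto (fun n => ∫ t in Set.Ioi (0:ℝ), F n t) atTop
        (𝓝 (∫ t in Set.Ioi (0:ℝ), Flim t)) :=
      MeasureTheory.tendsto_integral_of_dominated_convergence bound
        (fun n => ((hFcont n).mono Set.Ioi_subset_Ici_self).aestronglyMeasurable
          measurableSet_Ioi)
        hbound_int h_bound_ae h_lim
    have hLle : (∫ t in Set.Ioi (0:ℝ), L t) ≤ ∫ t in Set.Ioi (0:ℝ), Flim t :=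
      ge_of_tendsto' hlim_integral hLe_n
    -- split the limit integral
    have hdisj : Disjoint (Set.Ioc (0:ℝ) s) (Set.Ioi s) := Set.Ioc_disjoint_Ioi le_rfl
    have hunion : Set.Ioc (0:ℝ) s ∪ Set.Ioi s = Set.Ioi 0 := Set.Ioc_union_Ioi_eq_Ioi hs.le
    have hne' : ∀ᵐ t ∂(volume.restrict (Set.Ioc (0:ℝ) s)), t ≠ s := by
      apply MeasureTheory.ae_restrict_of_ae
      rw [MeasureTheory.ae_iff]
      simpa using MeasureTheory.measure_singleton s
    have hFlim_eq_L : ∀ᵐ t ∂(volume.restrict (Set.Ioc (0:ℝ) s)), Flim t = L t := by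
      filter_upwards [hne', MeasureTheory.ae_restrict_mem measurableSet_Ioc] with t hts ht
      have h1 : t < s := lt_of_le_of_ne ht.2 hts
      rw [hFlim_def, hL_def]
      simp only [if_pos h1, min_eq_left ht.2, one_mul]
    have hFlim_int1 : MeasureTheory.IntegrableOn Flim (Set.Ioc 0 s) := by
      have hLF : L =ᵐ[volume.restrict (Set.Ioc (0:ℝ) s)] Flim :=
        hFlim_eq_L.mono (fun t ht => ht.symm)
      exact (hLint.mono_set Set.Ioc_subset_Ioi_self).congr hLF
    have hFlim_Ioi : ∀ t ∈ Set.Ioi s, Flim t = E (u s) * Real.exp (-t/ε) := by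
      intro t ht
      rw [hFlim_def]
      simp only [if_neg (not_lt.mpr (le_of_lt (Set.mem_Ioi.mp ht))), min_eq_right (le_of_lt (Set.mem_Ioi.mp ht))]
      ring
    have hFlim_int2 : MeasureTheory.IntegrableOn Flim (Set.Ioi s) := by
      apply MeasureTheory.Integrable.congr
        ((integrableOn_exp_neg_div ε hε s).const_mul (E (u s)))
      filter_upwards [MeasureTheory.ae_restrict_mem measurableSet_Ioi] with t ht
      exact (hFlim_Ioi t ht).symm
    have hsplitF : ∫ t in Set.Ioi (0:ℝ), Flim t
        = (∫ t in Set.Ioc (0:ℝ) s, Flim t) + ∫ t in Set.Ioi s, Flim t := by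
      rw [← hunion, MeasureTheory.setIntegral_union hdisj measurableSet_Ioi
        hFlim_int1 hFlim_int2]
    have h2 : ∫ t in Set.Ioi s, Flim t = E (u s) * (ε * Real.exp (-s/ε)) := by
      rw [MeasureTheory.setIntegral_congr_fun measurableSet_Ioi hFlim_Ioi,
        MeasureTheory.integral_const_mul, integral_exp_neg_div ε hε s]
    have h3 : ∫ t in Set.Ioc (0:ℝ) s, Flim t = ∫ t in Set.Ioc (0:ℝ) s, L t :=
      MeasureTheory.integral_congr_ae hFlim_eq_L
    have hsplitL : ∫ t in Set.Ioi (0:ℝ), L t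
        = (∫ t in Set.Ioc (0:ℝ) s, L t) + ∫ t in Set.Ioi s, L t := by
      rw [← hunion, MeasureTheory.setIntegral_union hdisj measurableSet_Ioi
        (hLint.mono_set Set.Ioc_subset_Ioi_self)
        (hLint.mono_set (Set.Ioi_subset_Ioi hs.le))]
    have : E (u s) * (ε * Real.exp (-s/ε)) = ε * Real.exp (-s/ε) * E (u s) := by ring
    linarith [hLle, hsplitF, hsplitL, h2, h3]
  -- Step D : Gronwall-type argument
  have hfint : MeasureTheory.IntegrableOn f (Set.Ioi 0) := by
    apply MeasureTheory.Integrable.mono' hLint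
      ((hfcont.mono Set.Ioi_subset_Ici_self).aestronglyMeasurable measurableSet_Ioi)
    apply Filter.Eventually.of_forall
    intro t
    rw [Real.norm_eq_abs, abs_of_nonneg (hf0 t)]
    exact hf_le_L t
  set J : ℝ → ℝ := fun r => ∫ t in Set.Ioi r, f t with hJ_def
  have hJ0 : J 0 ≤ ε * E a := by
    refine le_trans ?_ hI0
    exact MeasureTheory.setIntegral_mono_on hfint hLint measurableSet_Ioi
      (fun t _ => hf_le_L t)
  have hJle : ∀ r : ℝ, 0 < r → J r ≤ ε * Real.exp (-r/ε) * E (u r) := by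
    intro r hr
    refine le_trans ?_ (key r hr)
    exact MeasureTheory.setIntegral_mono_on (hfint.mono_set (Set.Ioi_subset_Ioi hr.le))
      (hLint.mono_set (Set.Ioi_subset_Ioi hr.le)) measurableSet_Ioi (fun t _ => hf_le_L t)
  have hJnn : ∀ r : ℝ, 0 ≤ J r := fun r =>
    MeasureTheory.setIntegral_nonneg measurableSet_Ioi (fun t _ => hf0 t)
  have hJeq : ∀ r : ℝ, 0 ≤ r → J r = J 0 - ∫ t in (0:ℝ)..r, f t := by
    intro r hr
    rw [intervalIntegral.integral_of_le hr]
    have hsplit := MeasureTheory.setIntegral_union (f := f) (μ := volume)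
      (Set.Ioc_disjoint_Ioi (le_refl r)) measurableSet_Ioi
      (hfint.mono_set Set.Ioc_subset_Ioi_self)
      (hfint.mono_set (Set.Ioi_subset_Ioi hr))
    rw [Set.Ioc_union_Ioi_eq_Ioi hr] at hsplit
    rw [hJ_def]
    simp only
    linarith [hsplit]
  set G : ℝ → ℝ := fun r => Real.exp (r/ε) * (J 0 - ∫ t in (0:ℝ)..r, f t) with hG_def
  have hGJ : ∀ r : ℝ, 0 ≤ r → G r = Real.exp (r/ε) * J r := by
    intro r hr
    rw [hG_def]
    simp only
    rw [← hJeq r hr]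
  have hprim_cont : ContinuousOn (fun r => ∫ t in (0:ℝ)..r, f t) (Set.Icc 0 T) := by
    have hint : MeasureTheory.IntegrableOn f (Set.Icc 0 T) :=
      (hfcont.mono Set.Icc_subset_Ici_self).integrableOn_Icc
    apply (intervalIntegral.continuousOn_primitive hint).congr
    intro x hx
    exact intervalIntegral.integral_of_le hx.1
  have hGcont : ContinuousOn G (Set.Icc 0 T) := by
    rw [hG_def]
    exact ((Real.continuous_exp.comp (continuous_id.div_const ε)).continuousOn).mul
      (continuousOn_const.sub hprim_cont)
  have hee : ∀ x : ℝ, Real.exp (x/ε) * Real.exp (-x/ε) = 1 := by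
    intro x
    rw [← Real.exp_add]
    rw [show x/ε + -x/ε = 0 by ring]
    exact Real.exp_zero
  have hGderiv : ∀ x ∈ Set.Ioo (0:ℝ) T, HasDerivAt G (G x/ε - E (u x)) x := by
    intro x hx
    have hFTC : HasDerivAt (fun r => ∫ t in (0:ℝ)..r, f t) (f x) x := by
      apply intervalIntegral.integral_hasDerivAt_right
      · apply ContinuousOn.intervalIntegrable
        apply hfcont.mono
        rw [Set.uIcc_of_le hx.1.le]
        exact Set.Icc_subset_Ici_self
      · exact ⟨Set.Ioi 0, Ioi_mem_nhds hx.1,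
          (hfcont.mono Set.Ioi_subset_Ici_self).aestronglyMeasurable measurableSet_Ioi⟩
      · exact hfcont.continuousAt (Ici_mem_nhds hx.1)
    have hexp : HasDerivAt (fun r : ℝ => Real.exp (r/ε)) (Real.exp (x/ε) * (1/ε)) x :=
      ((hasDerivAt_id x).div_const ε).exp
    have hmul := hexp.mul ((hasDerivAt_const x (J 0)).sub hFTC)
    refine hmul.congr_deriv ?_
    have hG_x : G x = Real.exp (x/ε) * (J 0 - ∫ t in (0:ℝ)..x, f t) := rfl
    have hf_x : f x = Real.exp (-x/ε) * E (u x) := rfl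
    rw [hG_x, hf_x, Pi.sub_apply]
    linear_combination (-E (u x)) * hee x
  have hGanti : AntitoneOn G (Set.Icc 0 T) := by
    apply antitoneOn_of_deriv_nonpos (convex_Icc 0 T) hGcont
    · rw [interior_Icc]
      exact fun x hx => (hGderiv x hx).differentiableAt.differentiableWithinAt
    · rw [interior_Icc]
      intro x hx
      rw [(hGderiv x hx).deriv]
      have h1 := hJle x hx.1
      have h2 : G x ≤ ε * E (u x) := by
        rw [hGJ x hx.1.le]
        calc Real.exp (x/ε) * J x
            ≤ Real.exp (x/ε) * (ε * Real.exp (-x/ε) * E (u x)) :=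
              mul_le_mul_of_nonneg_left h1 (Real.exp_pos _).le
          _ = (Real.exp (x/ε) * Real.exp (-x/ε)) * (ε * E (u x)) := by ring
          _ = ε * E (u x) := by rw [hee x]; ring
      have : G x / ε ≤ E (u x) := by
        rw [div_le_iff₀ hε]
        linarith
      linarith
  have hG0 : G 0 = J 0 := by
    rw [hG_def]
    simp [intervalIntegral.integral_same]
  have hGT_nn : 0 ≤ G T := by
    rw [hGJ T hT]
    exact mul_nonneg (Real.exp_pos _).le (hJnn T)
  have hG_le : ∀ x ∈ Set.Icc (0:ℝ) T, G x ≤ ε * E a := by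
    intro x hx
    have := hGanti (Set.left_mem_Icc.mpr hT) hx hx.1
    rw [hG0] at this
    linarith
  -- Step E : conclusion
  have huIcc : Set.uIcc (0:ℝ) T = Set.Icc 0 T := Set.uIcc_of_le hT
  have hEu_cont : ContinuousOn (fun t => E (u t)) (Set.Icc 0 T) :=
    (hEc.comp_continuousOn hucont).mono Set.Icc_subset_Ici_self
  set g : ℝ → ℝ := fun x => G x/ε - E (u x) with hg_def
  have hgcont : ContinuousOn g (Set.Icc 0 T) := (hGcont.div_const ε).sub hEu_cont
  have hgint : IntervalIntegrable g volume 0 T := (huIcc ▸ hgcont).intervalIntegrable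
  have hGdivint : IntervalIntegrable (fun x => G x/ε) volume 0 T :=
    (huIcc ▸ (hGcont.div_const ε)).intervalIntegrable
  have hFTC2 : ∫ x in (0:ℝ)..T, g x = G T - G 0 :=
    intervalIntegral.integral_eq_sub_of_hasDeriv_right_of_le hT hGcont
      (fun x hx => (hGderiv x hx).hasDerivWithinAt) hgint
  have hsplitE : ∫ t in (0:ℝ)..T, E (u t)
      = (∫ t in (0:ℝ)..T, G t/ε) - ∫ t in (0:ℝ)..T, g t := by
    rw [← intervalIntegral.integral_sub hGdivint hgint]
    apply intervalIntegral.integral_congr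
    intro t _
    rw [hg_def]
    ring
  have h5 : (∫ t in (0:ℝ)..T, G t/ε) ≤ T * E a := by
    have hmono : ∀ x ∈ Set.Icc (0:ℝ) T, G x/ε ≤ E a := by
      intro x hx
      rw [div_le_iff₀ hε]
      have := hG_le x hx
      nlinarith [hEnn a]
    have hres := intervalIntegral.integral_mono_on (μ := volume)
      (f := fun x => G x/ε) (g := fun _ : ℝ => E a) hT hGdivint
      intervalIntegrable_const hmono
    rw [intervalIntegral.integral_const] at hres
    simpa using hres
  rw [hsplitE, hFTC2, hG0]
  have : J 0 ≤ ε * E a := hJ0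
  nlinarith [hGT_nn]
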